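/- Let β ∈ (0, 1/2), ν ∈ ℝ, and ε ∈ {1, −1}. Define c := i·2^{2β−1}·|Γ(β + iν)|²·e^{επν}·e^{(1−ε)iπβ}/(β·Γ(2β)²) + i·2^{2β}·Γ(β + iν)·e^{iπβ}·Γ(−2β)/(Γ(2β)·Γ(1 − β + iν)). Then Im( e^{(ε−1)iπβ}·c ) = 2^{2β−2}·|Γ(β + iν)|²·e^{επν}/(β·Γ(2β)²); in particular Im( e^{(ε−1)iπβ}·c ) ≠ 0. -/

import Mathlib

open Complex Real

/-- The connection coefficient `c^{ν,κ}_{+,ε}` for `0 < β < 1/2`: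
`c = i·2^{2β−1}·|Γ(β+iν)|²·e^{επν}·e^{(1−ε)iπβ}/(β·Γ(2β)²)
   + i·2^{2β}·Γ(β+iν)·e^{iπβ}·Γ(−2β)/(Γ(2β)·Γ(1−β+iν))`. -/
noncomputable def cPlus (β ν ε : ℝ) : ℂ :=
  I * (2 : ℂ) ^ (((2 * β - 1 : ℝ)) : ℂ) *
      ((‖Complex.Gamma ((β : ℂ) + I * (ν : ℂ))‖ : ℂ)) ^ 2 *
      (Real.exp (ε * π * ν) : ℂ) * Complex.exp ((1 - (ε : ℂ)) * I * (π : ℂ) * (β : ℂ)) /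
      ((β : ℂ) * Complex.Gamma (((2 * β : ℝ)) : ℂ) ^ 2) +
    I * (2 : ℂ) ^ (((2 * β : ℝ)) : ℂ) * Complex.Gamma ((β : ℂ) + I * (ν : ℂ)) *
      Complex.exp (I * (π : ℂ) * (β : ℂ)) * Complex.Gamma (-((2 * β : ℝ) : ℂ)) /
      (Complex.Gamma (((2 * β : ℝ)) : ℂ) * Complex.Gamma (1 - (β : ℂ) + I * (ν : ℂ)))

lemma key_eq (β ν ε : ℝ) (hβ0 : 0 < β) (hβ2 : β < 1/2) (hε : ε = 1 ∨ ε = -1) :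
    Complex.exp (((ε : ℂ) - 1) * I * (π : ℂ) * (β : ℂ)) * cPlus β ν ε =
      (((‖Complex.Gamma ((β : ℂ) + I * (ν : ℂ))‖ : ℝ) : ℂ)) ^ 2 *
        (I * ((((2:ℝ) ^ (2*β-1) : ℝ)) : ℂ) * ((Real.exp (ε*π*ν) : ℝ) : ℂ) *
            ((Real.sin (π*(2*β)) : ℝ) : ℂ)
          - I * ((((2:ℝ) ^ (2*β-1) : ℝ)) : ℂ) *
            (((Real.cos (π*β) : ℝ) : ℂ) + (ε : ℂ) * ((Real.sin (π*β) : ℝ) : ℂ) * I) *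
            (((Real.sin (π*β) : ℝ) : ℂ) * ((Real.cosh (π*ν) : ℝ) : ℂ)
              - ((Real.cos (π*β) : ℝ) : ℂ) * (((Real.sinh (π*ν) : ℝ) : ℂ) * I)))
        / ((β : ℂ) * ((Real.Gamma (2*β) : ℝ) : ℂ) ^ 2 * ((Real.sin (π*(2*β)) : ℝ) : ℂ)) := by
  have hπ := Real.pi_pos
  have hb : 0 < Real.sin (π*β) := Real.sin_pos_of_pos_of_lt_pi (by positivity) (by nlinarith)
  have hs2 : 0 < Real.sin (π*(2*β)) :=
    Real.sin_pos_of_pos_of_lt_pi (by positivity) (by nlinarith)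
  have hGpos : 0 < Real.Gamma (2*β) := Real.Gamma_pos_of_pos (by positivity)
  have hw : Complex.Gamma ((β:ℂ) + I * ν) ≠ 0 :=
    Complex.Gamma_ne_zero_of_re_pos (by simp [hβ0])
  have hcw : (starRingEnd ℂ) (Complex.Gamma ((β:ℂ) + I * ν)) ≠ 0 := by
    simpa using hw
  have hconj : Complex.Gamma ((β:ℂ) - I * ν) = (starRingEnd ℂ) (Complex.Gamma ((β:ℂ) + I * ν)) := by
    rw [← Complex.Gamma_conj]; congr 1; apply Complex.ext <;> simp
  have habs : (((‖Complex.Gamma ((β:ℂ) + I * ν)‖ : ℝ)) : ℂ) ^ 2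
      = Complex.Gamma ((β:ℂ) + I * ν) * (starRingEnd ℂ) (Complex.Gamma ((β:ℂ) + I * ν)) := by
    rw [← Complex.ofReal_pow, Complex.sq_norm, Complex.mul_conj]
  have hsinz : Complex.sin ((π:ℂ) * ((β:ℂ) - I * ν))
      = ((Real.sin (π*β) : ℝ) : ℂ) * ((Real.cosh (π*ν) : ℝ) : ℂ)
        - ((Real.cos (π*β) : ℝ) : ℂ) * (((Real.sinh (π*ν) : ℝ) : ℂ) * I) := by
    rw [show ((π:ℂ) * ((β:ℂ) - I * ν)) = ((π*β : ℝ) : ℂ) - ((π*ν : ℝ) : ℂ) * I by push_cast; ring,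
      Complex.sin_sub, Complex.cos_mul_I, Complex.sin_mul_I,
      ← Complex.ofReal_sin, ← Complex.ofReal_cos, ← Complex.ofReal_cosh, ← Complex.ofReal_sinh]
  have hsinzne : Complex.sin ((π:ℂ) * ((β:ℂ) - I * ν)) ≠ 0 := by
    rw [hsinz]
    intro h
    have h2 : Real.sin (π*β) * Real.cosh (π*ν) - 0 = 0 := by
      have := congrArg Complex.re h
      simpa only [Complex.sub_re, Complex.mul_re, Complex.mul_im, Complex.ofReal_re,
        Complex.ofReal_im, Complex.I_re, Complex.I_im, Complex.zero_re, mul_zero, zero_mul,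
        sub_zero, zero_sub, mul_one, one_mul, neg_zero] using this
    have := Real.cosh_pos (π*ν)
    nlinarith
  have hrefl1 : (starRingEnd ℂ) (Complex.Gamma ((β:ℂ) + I * ν)) *
      Complex.Gamma (1 - (β:ℂ) + I * ν) * Complex.sin ((π:ℂ) * ((β:ℂ) - I * ν)) = (π:ℂ) := by
    have h := Complex.Gamma_mul_Gamma_one_sub ((β:ℂ) - I * ν)
    rw [show (1:ℂ) - ((β:ℂ) - I * ν) = 1 - (β:ℂ) + I * ν by ring, hconj] at h
    rw [h, div_mul_cancel₀ _ hsinzne]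
  have hw' : Complex.Gamma (1 - (β:ℂ) + I * ν)
      = (π:ℂ) / (Complex.sin ((π:ℂ) * ((β:ℂ) - I * ν)) *
          (starRingEnd ℂ) (Complex.Gamma ((β:ℂ) + I * ν))) := by
    rw [eq_div_iff (mul_ne_zero hsinzne hcw)]
    linear_combination hrefl1
  have h2βne : (-((2*β : ℝ) : ℂ)) ≠ 0 := by
    simpa using (by positivity : (0:ℝ) < 2*β).ne'
  have hrefl2 : ((Real.Gamma (2*β) : ℝ) : ℂ) * Complex.Gamma (1 - ((2*β : ℝ) : ℂ)) *
      ((Real.sin (π*(2*β)) : ℝ) : ℂ) = (π:ℂ) := by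
    have h := Complex.Gamma_mul_Gamma_one_sub ((2*β : ℝ) : ℂ)
    rw [Complex.Gamma_ofReal, show ((π:ℂ) * ((2*β : ℝ) : ℂ)) = ((π*(2*β) : ℝ) : ℂ) by push_cast; ring,
      ← Complex.ofReal_sin] at h
    rw [h, div_mul_cancel₀]
    exact_mod_cast hs2.ne'
  have hgadd : Complex.Gamma (1 - ((2*β : ℝ) : ℂ))
      = -((2*β : ℝ) : ℂ) * Complex.Gamma (-((2*β : ℝ) : ℂ)) := by
    have h := Complex.Gamma_add_one (-((2*β : ℝ) : ℂ)) h2βne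
    rw [show -((2*β : ℝ) : ℂ) + 1 = 1 - ((2*β : ℝ) : ℂ) by ring] at h
    exact h
  have hs2cne : ((Real.sin (π*(2*β)) : ℝ) : ℂ) ≠ 0 := by exact_mod_cast hs2.ne'
  have hGcne : ((Real.Gamma (2*β) : ℝ) : ℂ) ≠ 0 := by exact_mod_cast hGpos.ne'
  have hGneg : Complex.Gamma (-((2*β : ℝ) : ℂ))
      = (π:ℂ) / (((Real.sin (π*(2*β)) : ℝ) : ℂ) * ((Real.Gamma (2*β) : ℝ) : ℂ) *
          (-((2*β : ℝ) : ℂ))) := by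
    rw [eq_div_iff (mul_ne_zero (mul_ne_zero hs2cne hGcne) h2βne)]
    rw [hgadd] at hrefl2
    linear_combination hrefl2
  have hgr : Complex.Gamma (((2*β : ℝ)) : ℂ) = ((Real.Gamma (2*β) : ℝ) : ℂ) :=
    Complex.Gamma_ofReal _
  have hX : Complex.exp (((ε:ℂ) - 1) * I * (π:ℂ) * (β:ℂ)) ≠ 0 := Complex.exp_ne_zero _
  have hexpε : Complex.exp ((ε:ℂ) * I * (π:ℂ) * (β:ℂ))
      = ((Real.cos (π*β) : ℝ) : ℂ) + (ε:ℂ) * ((Real.sin (π*β) : ℝ) : ℂ) * I := by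
    rcases hε with h | h <;> subst h
    · rw [show ((1:ℝ):ℂ) * I * ↑π * ↑β = ((π*β : ℝ) : ℂ) * I by push_cast; ring, Complex.exp_mul_I,
        ← Complex.ofReal_cos, ← Complex.ofReal_sin]
      norm_num
    · rw [show ((-1:ℝ):ℂ) * I * ↑π * ↑β = ((-(π*β) : ℝ) : ℂ) * I by push_cast; ring,
        Complex.exp_mul_I, ← Complex.ofReal_cos, ← Complex.ofReal_sin, Real.cos_neg, Real.sin_neg]
      push_cast; ring
  have hq : Complex.exp ((1 - (ε:ℂ)) * I * (π:ℂ) * (β:ℂ))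
      = (Complex.exp (((ε:ℂ) - 1) * I * (π:ℂ) * (β:ℂ)))⁻¹ := by
    rw [← Complex.exp_neg]; congr 1; ring
  have hIπβ : Complex.exp (I * (π:ℂ) * (β:ℂ))
      = (((Real.cos (π*β) : ℝ) : ℂ) + (ε:ℂ) * ((Real.sin (π*β) : ℝ) : ℂ) * I) *
        (Complex.exp (((ε:ℂ) - 1) * I * (π:ℂ) * (β:ℂ)))⁻¹ := by
    rw [← hexpε, ← Complex.exp_neg, ← Complex.exp_add]; congr 1; ring
  have ht1 : (2:ℂ) ^ (((2*β-1 : ℝ)) : ℂ) = (((2:ℝ) ^ (2*β-1) : ℝ) : ℂ) := by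
    rw [show (2:ℂ) = ((2:ℝ) : ℂ) by norm_num, ← Complex.ofReal_cpow (by norm_num)]
  have ht2 : (2:ℂ) ^ (((2*β : ℝ)) : ℂ) = 2 * (((2:ℝ) ^ (2*β-1) : ℝ) : ℂ) := by
    rw [show (2:ℂ) = ((2:ℝ) : ℂ) by norm_num, ← Complex.ofReal_cpow (by norm_num),
      show (2:ℝ) ^ (2*β) = (2:ℝ) ^ (2*β-1) * 2 by
        rw [← Real.rpow_add_one (by norm_num : (2:ℝ) ≠ 0) (2*β-1)]
        congr 1
        ring]
    push_cast; ring
  have hβcne : ((β:ℝ) : ℂ) ≠ 0 := by exact_mod_cast hβ0.ne'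
  have hπcne : ((π:ℝ) : ℂ) ≠ 0 := by exact_mod_cast hπ.ne'
  have hszne2 : (((Real.sin (π*β) : ℝ) : ℂ) * ((Real.cosh (π*ν) : ℝ) : ℂ)
      - ((Real.cos (π*β) : ℝ) : ℂ) * (((Real.sinh (π*ν) : ℝ) : ℂ) * I)) ≠ 0 :=
    hsinz ▸ hsinzne
  simp only [cPlus]
  rw [hq, hIπβ, hGneg, hw', hgr, ht1, ht2, habs, hsinz,
    show -((2*β : ℝ) : ℂ) = (-2)*(β:ℂ) by push_cast; ring]
  set X := Complex.exp (((ε:ℂ) - 1) * I * (π:ℂ) * (β:ℂ)) with hXdef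
  set w := Complex.Gamma ((β:ℂ) + I * (ν:ℂ)) with hwdef
  set wc := (starRingEnd ℂ) w with hwcdef
  set sa := ((Real.sin (π*β) : ℝ) : ℂ) with hsadef
  set ca := ((Real.cos (π*β) : ℝ) : ℂ) with hcadef
  set ch := ((Real.cosh (π*ν) : ℝ) : ℂ) with hchdef
  set sh := ((Real.sinh (π*ν) : ℝ) : ℂ) with hshdef
  set s2c := ((Real.sin (π*(2*β)) : ℝ) : ℂ) with hs2cdef
  set Gc := ((Real.Gamma (2*β) : ℝ) : ℂ) with hGcdef
  set Ec := ((Real.exp (ε*π*ν) : ℝ) : ℂ) with hEcdef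
  set tc := (((2:ℝ) ^ (2*β-1) : ℝ) : ℂ) with htcdef
  set bc := ((β:ℝ) : ℂ) with hbcdef
  set pc := ((π:ℝ) : ℂ) with hpcdef
  set ec := ((ε:ℝ) : ℂ) with hecdef
  clear_value X w wc sa ca ch sh s2c Gc Ec tc bc pc ec
  clear hexpε hq hIπβ ht1 ht2 hgr hGneg hw' hrefl1 hrefl2 hgadd hsinz hsinzne habs hconj hwcdef
  field_simp [hX, hcw, hszne2, hs2cne, hGcne, hβcne, hπcne]
  ring

/-- For `β ∈ (0, 1/2)`, `ν ∈ ℝ`, `ε = ±1`: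
`Im( e^{(ε−1)iπβ}·c ) = 2^{2β−2}·|Γ(β+iν)|²·e^{επν}/(β·Γ(2β)²)`, and in particular this
imaginary part is nonzero. -/
theorem cPlus_imaginary_part (β ν ε : ℝ)
    (hβ : β ∈ Set.Ioo (0 : ℝ) (1 / 2)) (hε : ε = 1 ∨ ε = -1) :
    (Complex.exp (((ε : ℂ) - 1) * I * (π : ℂ) * (β : ℂ)) * cPlus β ν ε).im =
        (2 : ℝ) ^ (2 * β - 2) * ‖Complex.Gamma ((β : ℂ) + I * (ν : ℂ))‖ ^ 2 *
          Real.exp (ε * π * ν) / (β * Real.Gamma (2 * β) ^ 2) ∧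
      (Complex.exp (((ε : ℂ) - 1) * I * (π : ℂ) * (β : ℂ)) * cPlus β ν ε).im ≠ 0 := by
  obtain ⟨hβ0, hβ2⟩ := hβ
  have hπ := Real.pi_pos
  have hb : 0 < Real.sin (π*β) := Real.sin_pos_of_pos_of_lt_pi (by positivity) (by nlinarith)
  have ha : 0 < Real.cos (π*β) := Real.cos_pos_of_mem_Ioo
    ⟨by nlinarith, by nlinarith⟩
  have hGpos : 0 < Real.Gamma (2*β) := Real.Gamma_pos_of_pos (by positivity)
  have hw : Complex.Gamma ((β:ℂ) + I * ν) ≠ 0 :=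
    Complex.Gamma_ne_zero_of_re_pos (by simp [hβ0])
  have him : (Complex.exp (((ε : ℂ) - 1) * I * (π : ℂ) * (β : ℂ)) * cPlus β ν ε).im =
      (2 : ℝ) ^ (2 * β - 2) * ‖Complex.Gamma ((β : ℂ) + I * (ν : ℂ))‖ ^ 2 *
        Real.exp (ε * π * ν) / (β * Real.Gamma (2 * β) ^ 2) := by
    rw [key_eq β ν ε hβ0 hβ2 hε,
      show ((β:ℂ) * ((Real.Gamma (2*β) : ℝ):ℂ)^2 * ((Real.sin (π*(2*β)) : ℝ):ℂ))
          = ((β * Real.Gamma (2*β)^2 * Real.sin (π*(2*β)) : ℝ) : ℂ) by push_cast; ring,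
      Complex.div_ofReal_im]
    simp only [← Complex.ofReal_pow, Complex.mul_im, Complex.mul_re, Complex.add_re,
      Complex.add_im, Complex.sub_re, Complex.sub_im, Complex.I_re, Complex.I_im,
      Complex.ofReal_re, Complex.ofReal_im]
    rw [show π*(2*β) = 2*(π*β) by ring, Real.sin_two_mul,
      show (2:ℝ)^(2*β-1) = (2:ℝ)^(2*β-2)*2 by
        rw [← Real.rpow_add_one (by norm_num : (2:ℝ) ≠ 0) (2*β-2)]; congr 1; ring]
    rcases hε with h | h <;> subst h
    · rw [Real.cosh_eq, Real.sinh_eq, show (1:ℝ)*π*ν = π*ν by ring]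
      field_simp [hβ0.ne', hGpos.ne', hb.ne', ha.ne']
      have hb' := hb.ne'; have ha' := ha.ne'
      rw [mul_comm] at hb' ha'
      ring_nf
      field_simp
    · rw [Real.cosh_eq, Real.sinh_eq, show (-1:ℝ)*π*ν = -(π*ν) by ring]
      field_simp [hβ0.ne', hGpos.ne', hb.ne', ha.ne']
      have hb' := hb.ne'; have ha' := ha.ne'
      rw [mul_comm] at hb' ha'
      ring_nf
      field_simp
  refine ⟨him, ?_⟩
  rw [him]
  have : (0:ℝ) < (2 : ℝ) ^ (2 * β - 2) * ‖Complex.Gamma ((β : ℂ) + I * (ν : ℂ))‖ ^ 2 *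
      Real.exp (ε * π * ν) / (β * Real.Gamma (2 * β) ^ 2) :=
    div_pos (mul_pos (mul_pos (Real.rpow_pos_of_pos (by norm_num) _)
      (pow_pos (norm_pos_iff.mpr hw) 2)) (Real.exp_pos _)) (mul_pos hβ0 (pow_pos hGpos 2))
  exact this.ne'
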